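/- Let n ≥ 4 and 1 ≤ k ≤ n/2 be integers. Then the expanding constant of the generalised Petersen graph P(n,k) satisfies h(P(n,k)) < √(24π/(⌊√n⌋ − 1)); equivalently, there exists a nonempty set F of vertices of P(n,k) with |F| ≤ n such that the number of edges of P(n,k) with exactly one endpoint in F is less than √(24π/(⌊√n⌋ − 1))·|F|. -/

import Mathlib

open scoped Classical

/-- The generalised Petersen graph `P(n,k)` on vertex set `ZMod n × Bool`:
`(i, false)` is the outer vertex `a i`, `(i, true)` is the inner vertex `b i`;
edges are `a i a (i+1)`, `a i b i` and `b i b (i+k)` (indices mod `n`). -/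
def petersen (n k : ℕ) : SimpleGraph (ZMod n × Bool) :=
  SimpleGraph.fromRel fun v w =>
    (v.2 = false ∧ w.2 = false ∧ w.1 = v.1 + 1) ∨
    (v.2 = false ∧ w.2 = true ∧ w.1 = v.1) ∨
    (v.2 = true ∧ w.2 = true ∧ w.1 = v.1 + (k : ZMod n))

/-- The number of edges of `G` with exactly one endpoint in `F`. -/
noncomputable def edgeBoundary {V : Type*} (G : SimpleGraph V) (F : Finset V) : ℕ :=
  Set.ncard {e : Sym2 V | e ∈ G.edgeSet ∧ ∃ v w, e = s(v, w) ∧ v ∈ F ∧ w ∉ F}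

/-- The expanding (Cheeger) constant of a finite graph:
`h(G) = min { |∂F| / |F| : F ⊆ V, F ≠ ∅, |F| ≤ |V| / 2 }`. -/
noncomputable def expandingConstant {V : Type*} [Fintype V] (G : SimpleGraph V) : ℝ :=
  ⨅ F : {F : Finset V // F.Nonempty ∧ 2 * F.card ≤ Fintype.card V},
    (edgeBoundary G F.1 : ℝ) / (F.1.card : ℝ)

set_option linter.unusedSectionVars false
set_option linter.unusedVariables false
set_option linter.unusedTactic false

lemma edgeBoundary_le_of_subset {V : Type*} (G : SimpleGraph V) (F : Finset V)
    (E₀ : Finset (Sym2 V))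
    (h : ∀ e ∈ G.edgeSet, ∀ v w, e = s(v,w) → v ∈ F → w ∉ F → e ∈ E₀) :
    edgeBoundary G F ≤ E₀.card := by
  have hsub : {e : Sym2 V | e ∈ G.edgeSet ∧ ∃ v w, e = s(v, w) ∧ v ∈ F ∧ w ∉ F} ⊆ ↑E₀ := by
    rintro e ⟨he, v, w, rfl, hv, hw⟩
    exact h _ he v w rfl hv hw
  calc Set.ncard _ ≤ (↑E₀ : Set (Sym2 V)).ncard := Set.ncard_le_ncard hsub E₀.finite_toSet
    _ = E₀.card := Set.ncard_coe_finset E₀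


lemma expandingConstant_le {V : Type*} [Fintype V] (G : SimpleGraph V) (F : Finset V)
    (h1 : F.Nonempty) (h2 : 2 * F.card ≤ Fintype.card V) :
    expandingConstant G ≤ (edgeBoundary G F : ℝ) / (F.card : ℝ) := by
  have hb : BddBelow (Set.range fun F : {F : Finset V // F.Nonempty ∧ 2 * F.card ≤ Fintype.card V} =>
      (edgeBoundary G F.1 : ℝ) / (F.1.card : ℝ)) := by
    refine ⟨0, ?_⟩
    rintro x ⟨F', rfl⟩
    positivity
  exact ciInf_le hb ⟨F, h1, h2⟩


-- singleton boundary ≤ 3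
lemma singleton_boundary (n k : ℕ) [NeZero n] :
    edgeBoundary (petersen n k) {((0 : ZMod n), false)} ≤ 3 := by
  classical
  set v₀ : ZMod n × Bool := ((0 : ZMod n), false)
  have h := edgeBoundary_le_of_subset (petersen n k) {v₀}
    ({s(v₀, ((1 : ZMod n), false)), s(v₀, ((0 : ZMod n), true)), s(v₀, ((-1 : ZMod n), false))})
    ?_
  · refine h.trans ?_
    have := Finset.card_insert_le s(v₀, ((1 : ZMod n), false))
      ({s(v₀, ((0 : ZMod n), true)), s(v₀, ((-1 : ZMod n), false))} : Finset (Sym2 (ZMod n × Bool)))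
    have h2 := Finset.card_insert_le s(v₀, ((0 : ZMod n), true))
      ({s(v₀, ((-1 : ZMod n), false))} : Finset (Sym2 (ZMod n × Bool)))
    simp only [Finset.card_singleton] at *
    omega
  · rintro e he v w rfl hv hw
    simp only [Finset.mem_singleton] at hv
    subst hv
    rw [SimpleGraph.mem_edgeSet] at he
    rw [petersen, SimpleGraph.fromRel_adj] at he
    obtain ⟨hne, hrel | hrel⟩ := he
    · rcases hrel with ⟨h1, h2, h3⟩ | ⟨h1, h2, h3⟩ | ⟨h1, h2, h3⟩
      · have : w = ((1 : ZMod n), false) := by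
          ext
          · simpa [v₀] using h3
          · simpa using h2
        simp [this]
      · have : w = ((0 : ZMod n), true) := by
          ext
          · simpa using h3
          · simpa using h2
        simp [this]
      · simp [v₀] at h1
    · rcases hrel with ⟨h1, h2, h3⟩ | ⟨h1, h2, h3⟩ | ⟨h1, h2, h3⟩
      · have : w = ((-1 : ZMod n), false) := by
          ext
          · have h4 : (0 : ZMod n) = w.1 + 1 := h3
            have : w.1 = -1 := by linear_combination -h4
            simpa using this
          · simpa using h1
        simp [this]
      · simp [v₀] at h2
      · simp [v₀] at h2

def gdist (n k m : ℕ) : ℕ := min ((m*k) % n) (n - (m*k) % n)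

-- mod-distance helper
lemma gdist_le_or (n k : ℕ) (hn : 1 ≤ n) (j j' : ℕ) (hjj : j < j') :
    gdist n k (j'-j) ≤ (j'*k)%n - (j*k)%n ∨ gdist n k (j'-j) ≤ (j*k)%n - (j'*k)%n := by
  have hBA : j' * k = j * k + (j'-j) * k := by rw [← Nat.add_mul]; congr 1; omega
  have hvn : (j*k)%n < n := Nat.mod_lt _ (by omega)
  have hwn : ((j'-j)*k)%n < n := Nat.mod_lt _ (by omega)
  have hmod : (j'*k)%n = ((j*k)%n + ((j'-j)*k)%n) % n := by
    rw [hBA, Nat.add_mod]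
  have hmin1 : gdist n k (j'-j) ≤ ((j'-j)*k)%n := min_le_left _ _
  have hmin2 : gdist n k (j'-j) ≤ n - ((j'-j)*k)%n := min_le_right _ _
  by_cases hcase : (j*k)%n + ((j'-j)*k)%n < n
  · rw [Nat.mod_eq_of_lt hcase] at hmod
    omega
  · have h1 : ((j*k)%n + ((j'-j)*k)%n) % n = (j*k)%n + ((j'-j)*k)%n - n := by
      rw [Nat.mod_eq_sub_mod (by omega), Nat.mod_eq_of_lt (by omega)]
    rw [h1] at hmod
    omega

-- pigeonhole: some 1 ≤ m ≤ s has s * gdist < n,  s := n.sqrt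
lemma exists_small (n k : ℕ) (hn : 1 ≤ n) (hs : 1 ≤ n.sqrt) :
    ∃ m, 1 ≤ m ∧ m ≤ n.sqrt ∧ n.sqrt * gdist n k m < n := by
  classical
  set s := n.sqrt with hsdef
  have key : ∀ j j' : ℕ, j < j' → j' < s + 1 →
      (j*k) % n * s / n = (j'*k) % n * s / n → s * gdist n k (j'-j) < n := by
    intro j j' hlt hj' heq
    set v := (j*k) % n with hv
    set v' := (j'*k) % n with hv'
    have e1 := Nat.div_add_mod (v * s) n
    have e2 := Nat.div_add_mod (v' * s) n
    have h3 : v * s % n < n := Nat.mod_lt _ (by omega)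
    have h4 : v' * s % n < n := Nat.mod_lt _ (by omega)
    rw [heq] at e1
    obtain hcase | hcase := gdist_le_or n k hn j j' hlt
    · have h5 : s * gdist n k (j'-j) ≤ s * (v' - v) := Nat.mul_le_mul_left _ hcase
      have h6 : s * (v' - v) = v' * s - v * s := by rw [Nat.mul_comm, Nat.sub_mul]
      omega
    · have h5 : s * gdist n k (j'-j) ≤ s * (v - v') := Nat.mul_le_mul_left _ hcase
      have h6 : s * (v - v') = v * s - v' * s := by rw [Nat.mul_comm, Nat.sub_mul]
      omega
  have hmaps : ∀ j ∈ Finset.range (s+1), (j*k) % n * s / n ∈ Finset.range s := by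
    intro j _
    simp only [Finset.mem_range]
    have h1 : (j*k) % n < n := Nat.mod_lt _ (by omega)
    rw [Nat.div_lt_iff_lt_mul (by omega : 0 < n)]
    calc (j*k) % n * s < n * s := by
          exact Nat.mul_lt_mul_of_lt_of_le h1 le_rfl (by omega)
      _ = s * n := Nat.mul_comm _ _
  obtain ⟨j, hj, j', hj', hne, heq⟩ :=
    Finset.exists_ne_map_eq_of_card_lt_of_maps_to
      (by simp : (Finset.range s).card < (Finset.range (s+1)).card) hmaps
  simp only [Finset.mem_range] at hj hj'
  rcases Ne.lt_or_gt hne with hlt | hlt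
  · exact ⟨j' - j, by omega, by omega, key j j' hlt hj' heq⟩
  · exact ⟨j - j', by omega, by omega, key j' j hlt hj heq.symm⟩

-- signed representative
lemma signed_rep (n k m : ℕ) (hn : 1 ≤ n) :
    ∃ α : ℤ, |α| = gdist n k m ∧ ∃ c : ℤ, (m*k : ℤ) = n * c + α := by
  set u := (m*k) % n with hu
  have hlt : u < n := Nat.mod_lt _ (by omega)
  have hdm : (m*k : ℤ) = n * ((m*k : ℕ)/n : ℕ) + u := by
    exact_mod_cast (Nat.div_add_mod (m*k) n).symm
  by_cases h : 2*u ≤ n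
  · refine ⟨u, ?_, ((m*k : ℕ)/n : ℕ), hdm⟩
    unfold gdist
    rw [← hu]
    have : min u (n - u) = u := by omega
    rw [this]
    simp
  · refine ⟨(u : ℤ) - n, ?_, ((m*k : ℕ)/n : ℕ) + 1, by rw [hdm]; ring⟩
    unfold gdist
    rw [← hu]
    have h1 : min u (n - u) = n - u := by omega
    rw [h1, abs_sub_comm]
    rw [abs_of_nonneg (by push_cast; omega)]
    push_cast
    omega

-- KEY LEMMA: determinant argument
lemma key_sep (n k d e : ℕ) (hn : 1 ≤ n) (hd : 1 ≤ d) (he : 1 ≤ e) (hed : e < d)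
    (hlt : gdist n k d < gdist n k e) :
    n ≤ 2 * d * gdist n k e := by
  obtain ⟨α, hα, c₁, hc₁⟩ := signed_rep n k e hn
  obtain ⟨β, hβ, c₂, hc₂⟩ := signed_rep n k d hn
  set A := gdist n k e
  set r := gdist n k d
  set D : ℤ := d * α - e * β with hD
  have hdvd : (n : ℤ) ∣ D := by
    refine ⟨e * c₂ - d * c₁, ?_⟩
    have h1 : (d : ℤ) * (e * k) = d * (n * c₁ + α) := by rw [← hc₁]
    have h2 : (e : ℤ) * (d * k) = e * (n * c₂ + β) := by rw [← hc₂]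
    nlinarith [h1, h2]
  have hDne : D ≠ 0 := by
    intro h0
    have : (d : ℤ) * α = e * β := by linarith [hD ▸ h0]
    have habs : (d : ℤ) * A = e * r := by
      have := congrArg abs this
      rwa [abs_mul, abs_mul, hα, hβ, abs_of_nonneg (by positivity : (0:ℤ) ≤ (d:ℤ)),
        abs_of_nonneg (by positivity : (0:ℤ) ≤ (e:ℤ))] at this
    have h1 : (e : ℤ) * r < d * A := by
      have hA : (0:ℤ) < A := by exact_mod_cast hlt.trans_le' (Nat.zero_le _)
      have : (e : ℤ) * r ≤ d * r := by
        apply mul_le_mul_of_nonneg_right _ (by positivity)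
        exact_mod_cast hed.le
      have h2 : (d:ℤ) * r < d * A := by
        apply mul_lt_mul_of_pos_left _ (by exact_mod_cast hd)
        exact_mod_cast hlt
      linarith
    linarith
  have hn_le : (n : ℤ) ≤ |D| := Int.le_of_dvd (abs_pos.2 hDne) ((dvd_abs _ _).mpr hdvd)
  have hDbound : |D| ≤ d * A + e * r := by
    calc |D| ≤ |(d:ℤ) * α| + |(e:ℤ) * β| := abs_sub _ _
      _ = d * A + e * r := by
          rw [abs_mul, abs_mul, hα, hβ, abs_of_nonneg (by positivity : (0:ℤ) ≤ (d:ℤ)),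
            abs_of_nonneg (by positivity : (0:ℤ) ≤ (e:ℤ))]
  have : (n : ℤ) ≤ 2 * d * A := by
    have h1 : (e:ℤ) * r ≤ d * A := by
      have hA : (r:ℤ) ≤ A := by exact_mod_cast hlt.le
      have : (e:ℤ) ≤ d := by exact_mod_cast hed.le
      nlinarith [hβ ▸ abs_nonneg β]
    linarith
  exact_mod_cast this

def iset (n k d M : ℕ) : Finset (ZMod n) :=
  ((Finset.range d) ×ˢ (Finset.range M)).image
    (fun p => ((p.1 * k + p.2 : ℕ) : ZMod n))

lemma mem_iset {n k d M : ℕ} {i : ZMod n} :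
    i ∈ iset n k d M ↔ ∃ e < d, ∃ x < M, i = ((e * k + x : ℕ) : ZMod n) := by
  simp only [iset, Finset.mem_image, Finset.mem_product, Finset.mem_range, Prod.exists]
  constructor
  · rintro ⟨e, x, ⟨he, hx⟩, rfl⟩; exact ⟨e, he, x, hx, rfl⟩
  · rintro ⟨e, he, x, hx, rfl⟩; exact ⟨e, x, ⟨he, hx⟩, rfl⟩

def Xf (M r : ℕ) : Finset ℕ := (Finset.range M).filter (fun x => x < r ∨ M ≤ x + r)

lemma Xf_card (M r : ℕ) : (Xf M r).card ≤ 2*r := by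
  have hsub : Xf M r ⊆ Finset.range r ∪ Finset.Ico (M-r) M := by
    intro x hx
    simp only [Xf, Finset.mem_filter, Finset.mem_range] at hx
    simp only [Finset.mem_union, Finset.mem_range, Finset.mem_Ico]
    omega
  calc (Xf M r).card ≤ _ := Finset.card_le_card hsub
    _ ≤ (Finset.range r).card + (Finset.Ico (M-r) M).card := Finset.card_union_le _ _
    _ ≤ 2*r := by rw [Finset.card_range, Nat.card_Ico]; omega

section Wrap
variable {n k d M r : ℕ} [NeZero n]

lemma cast_dk (n k d : ℕ) [NeZero n] :
    ((d*k : ℕ) : ZMod n) = (((d*k) % n : ℕ) : ZMod n) :=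
  (ZMod.natCast_eq_natCast_iff _ _ _).mpr (Nat.mod_modEq (d*k) n).symm

lemma wrap_modeq (n k d x : ℕ) : (d*k + x) ≡ ((d*k) % n + x) [MOD n] :=
  Nat.ModEq.add_right x (Nat.mod_modEq (d*k) n).symm

lemma wrap_top (hn : 1 ≤ n) (hd : 1 ≤ d) (hr : gdist n k d = r)
    {x : ℕ} (hx : x < M) (hx1 : r ≤ x) (hx2 : x + r < M) (hMn : M ≤ n) :
    ((d*k + x : ℕ) : ZMod n) ∈ iset n k d M := by
  have hρn : (d*k) % n < n := Nat.mod_lt _ (by omega)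
  unfold gdist at hr
  rcases min_cases ((d*k) % n) (n - (d*k) % n) with ⟨h1, h2⟩ | ⟨h1, h2⟩
  · -- r = (d*k) % n
    have hrρ : r = (d*k) % n := by omega
    rw [mem_iset]
    refine ⟨0, by omega, r + x, by omega, ?_⟩
    apply (ZMod.natCast_eq_natCast_iff _ _ _).mpr
    have he : 0*k + (r + x) = (d*k) % n + x := by omega
    rw [he]
    exact wrap_modeq n k d x
  · -- r = n - (d*k) % n
    have hrρ : r = n - (d*k) % n := by omega
    rw [mem_iset]
    refine ⟨0, by omega, x - r, by omega, ?_⟩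
    apply (ZMod.natCast_eq_natCast_iff _ _ _).mpr
    have he : 0*k + (x - r) = x - r := by omega
    rw [he]
    calc d*k + x ≡ (d*k) % n + x [MOD n] := wrap_modeq n k d x
      _ = n + (x - r) := by omega
      _ ≡ x - r [MOD n] := by
          have := Nat.add_mod_left n (x - r)
          exact this
    
lemma wrap_bot (hn : 1 ≤ n) (hr : gdist n k d = r) (hd : 1 ≤ d)
    {x : ℕ} (hx : x < M) (hx1 : r ≤ x) (hx2 : x + r < M) (hMn : M ≤ n) :
    ∃ y < M, (((d-1)*k + y : ℕ) : ZMod n) + (k : ZMod n) = ((x : ℕ) : ZMod n) := by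
  have hρn : (d*k) % n < n := Nat.mod_lt _ (by omega)
  obtain ⟨d', rfl⟩ : ∃ d', d = d' + 1 := ⟨d - 1, by omega⟩
  have hdd : (d' + 1) - 1 = d' := by omega
  rw [hdd]
  unfold gdist at hr
  rcases min_cases (((d'+1)*k) % n) (n - ((d'+1)*k) % n) with ⟨h1, h2⟩ | ⟨h1, h2⟩
  · refine ⟨x - r, by omega, ?_⟩
    have hcast : ((d'*k + (x-r) : ℕ) : ZMod n) + (k : ZMod n)
        = (((d'+1)*k + (x-r) : ℕ) : ZMod n) := by push_cast; ring
    rw [hcast]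
    apply (ZMod.natCast_eq_natCast_iff _ _ _).mpr
    calc (d'+1)*k + (x-r) ≡ ((d'+1)*k) % n + (x-r) [MOD n] := wrap_modeq n k (d'+1) (x-r)
      _ = x := by omega
  · refine ⟨x + r, by omega, ?_⟩
    have hcast : ((d'*k + (x+r) : ℕ) : ZMod n) + (k : ZMod n)
        = (((d'+1)*k + (x+r) : ℕ) : ZMod n) := by push_cast; ring
    rw [hcast]
    apply (ZMod.natCast_eq_natCast_iff _ _ _).mpr
    calc (d'+1)*k + (x+r) ≡ ((d'+1)*k) % n + (x+r) [MOD n] := wrap_modeq n k (d'+1) (x+r)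
      _ = n + x := by omega
      _ ≡ x [MOD n] := Nat.add_mod_left n x

end Wrap

section Boundary
variable (n k d M r : ℕ) [NeZero n]

noncomputable def bset : Finset (Sym2 (ZMod n × Bool)) :=
  ((Finset.range d).image (fun e =>
      s(((((e*k + (M-1) : ℕ)) : ZMod n), false), ((((e*k + (M-1) : ℕ)) : ZMod n) + 1, false))) ∪
   (Finset.range d).image (fun e =>
      s((((e*k : ℕ) : ZMod n) - 1, false), (((e*k : ℕ) : ZMod n), false)))) ∪
  ((Xf M r).image (fun x =>
      s((((((d-1)*k + x : ℕ)) : ZMod n), true), ((((((d-1)*k + x : ℕ)) : ZMod n) + (k : ZMod n)), true))) ∪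
   (Xf M r).image (fun x =>
      s(((((x : ℕ) : ZMod n) - (k : ZMod n)), true), ((((x : ℕ) : ZMod n)), true))))


lemma bset_card : (bset n k d M r).card ≤ 2*d + 4*r := by
  unfold bset
  calc _ ≤ _ + _ := Finset.card_union_le _ _
    _ ≤ (_ + _) + (_ + _) := by
        gcongr <;> exact Finset.card_union_le _ _
    _ ≤ (d + d) + (2*r + 2*r) := by
        gcongr <;>
          first
          | exact (Finset.card_image_le).trans (by simp)
          | exact (Finset.card_image_le).trans (Xf_card M r)
    _ = 2*d + 4*r := by ring

lemma boundary_le (hd : 1 ≤ d) (hM : 1 ≤ M) (hMn : 2*d*M ≤ n)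
    (hr : gdist n k d = r) :
    edgeBoundary (petersen n k) ((iset n k d M) ×ˢ (Finset.univ : Finset Bool))
      ≤ 2*d + 4*r := by
  have hn : 1 ≤ n := Nat.one_le_iff_ne_zero.mpr (NeZero.ne n)
  have hMln : M ≤ n := by nlinarith
  refine le_trans (edgeBoundary_le_of_subset _ _ (bset n k d M r) ?_) (bset_card n k d M r)
  rintro ed hed v w rfl hv hw
  obtain ⟨i, bi⟩ := v
  obtain ⟨j, bj⟩ := w
  simp only [Finset.mem_product, Finset.mem_univ, and_true] at hv hw
  rw [SimpleGraph.mem_edgeSet, petersen, SimpleGraph.fromRel_adj] at hed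
  obtain ⟨hne, hcases⟩ := hed
  obtain ⟨e₀, he₀, x, hx, rfl⟩ := mem_iset.mp hv
  simp only [] at hcases
  rcases hcases with (⟨hb1, hb2, hj⟩ | ⟨hb1, hb2, hj⟩ | ⟨hb1, hb2, hj⟩) |
    (⟨hb1, hb2, hj⟩ | ⟨hb1, hb2, hj⟩ | ⟨hb1, hb2, hj⟩)
  · -- C1: outer, j = i + 1
    have hxM : x = M - 1 := by
      by_contra hne'
      apply hw
      rw [mem_iset]
      refine ⟨e₀, he₀, x + 1, by omega, ?_⟩
      rw [hj]
      push_cast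
      ring
    subst hxM
    simp only [bset, Finset.mem_union, Finset.mem_image]
    refine Or.inl (Or.inl ⟨e₀, by simp [he₀], ?_⟩)
    rw [hj, hb1, hb2]
  · -- C2: spoke, j = i : contradiction
    exact absurd (hj ▸ hv) hw
  · -- C3: inner, j = i + k
    have he₀d : e₀ = d - 1 := by
      by_contra hne'
      apply hw
      rw [mem_iset]
      refine ⟨e₀ + 1, by omega, x, hx, ?_⟩
      rw [hj]
      push_cast
      ring
    subst he₀d
    have hxX : x ∈ Xf M r := by
      by_contra hne'
      simp only [Xf, Finset.mem_filter, Finset.mem_range] at hne'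
      push_neg at hne'
      obtain ⟨hx1, hx2⟩ := hne' hx
      apply hw
      have hwt := wrap_top (M := M) hn hd hr hx hx1 hx2 hMln
      have hid : ((d*k + x : ℕ) : ZMod n) = (((d-1)*k + x : ℕ) : ZMod n) + (k : ZMod n) := by
        obtain ⟨d', rfl⟩ : ∃ d', d = d' + 1 := ⟨d - 1, by omega⟩
        simp only [Nat.add_sub_cancel]
        push_cast
        ring
      rw [hid] at hwt
      rw [hj]
      exact hwt
    simp only [bset, Finset.mem_union, Finset.mem_image]
    refine Or.inr (Or.inl ⟨x, hxX, ?_⟩)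
    rw [hj, hb1, hb2]
  · -- C4: outer reversed, i = j + 1
    have hx0 : x = 0 := by
      by_contra hne'
      apply hw
      rw [mem_iset]
      refine ⟨e₀, he₀, x - 1, by omega, ?_⟩
      have : (((e₀*k + x : ℕ)) : ZMod n) = ((e₀*k + (x-1) : ℕ) : ZMod n) + 1 := by
        obtain ⟨x', rfl⟩ : ∃ x', x = x' + 1 := ⟨x - 1, by omega⟩
        simp only [Nat.add_sub_cancel]
        push_cast
        ring
      linear_combination this - hj
    subst hx0
    have hjj : j = ((e₀*k : ℕ) : ZMod n) - 1 := by
      have h0 : (((e₀*k + 0 : ℕ)) : ZMod n) = ((e₀*k : ℕ) : ZMod n) := by norm_num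
      rw [h0] at hj
      linear_combination -hj
    simp only [bset, Finset.mem_union, Finset.mem_image]
    refine Or.inl (Or.inr ⟨e₀, by simp [he₀], ?_⟩)
    rw [hjj, hb1, hb2]
    have h0 : (((e₀*k + 0 : ℕ)) : ZMod n) = ((e₀*k : ℕ) : ZMod n) := by norm_num
    rw [h0]
    exact Sym2.eq_swap
  · -- C5: spoke reversed : contradiction
    exact absurd (hj ▸ hv) hw
  · -- C6: inner reversed, i = j + k
    have he₀0 : e₀ = 0 := by
      by_contra hne'
      apply hw
      rw [mem_iset]
      refine ⟨e₀ - 1, by omega, x, hx, ?_⟩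
      have : (((e₀*k + x : ℕ)) : ZMod n) = (((e₀-1)*k + x : ℕ) : ZMod n) + (k : ZMod n) := by
        obtain ⟨e', rfl⟩ : ∃ e', e₀ = e' + 1 := ⟨e₀ - 1, by omega⟩
        simp only [Nat.add_sub_cancel]
        push_cast
        ring
      linear_combination this - hj
    subst he₀0
    have hix : ((0*k + x : ℕ) : ZMod n) = ((x : ℕ) : ZMod n) := by norm_num
    have hxX : x ∈ Xf M r := by
      by_contra hne'
      simp only [Xf, Finset.mem_filter, Finset.mem_range] at hne'
      push_neg at hne'
      obtain ⟨hx1, hx2⟩ := hne' hx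
      apply hw
      obtain ⟨y, hy, hwb⟩ := wrap_bot (M := M) hn hr hd hx hx1 hx2 hMln
      rw [mem_iset]
      refine ⟨d - 1, by omega, y, hy, ?_⟩
      rw [hix] at hj
      linear_combination -hwb - hj
    simp only [bset, Finset.mem_union, Finset.mem_image]
    refine Or.inr (Or.inr ⟨x, hxX, ?_⟩)
    rw [hix] at hj ⊢
    have hjj : j = ((x : ℕ) : ZMod n) - (k : ZMod n) := by linear_combination -hj
    rw [hjj, hb1, hb2]
    exact Sym2.eq_swap

end Boundary

lemma collision_aux {n k d M : ℕ} [NeZero n] (hM : 1 ≤ M) (hMn : 2*d*M ≤ n)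
    (hd : 1 ≤ d)
    (hsep : ∀ c, 1 ≤ c → c < d → M ≤ gdist n k c)
    {e x e' x' : ℕ} (he : e < d) (hx : x < M) (he' : e' < d) (hx' : x' < M)
    (hee : e ≤ e')
    (heq : ((e * k + x : ℕ) : ZMod n) = ((e' * k + x' : ℕ) : ZMod n)) :
    e = e' ∧ x = x' := by
  have hn : 1 ≤ n := Nat.one_le_iff_ne_zero.mpr (NeZero.ne n)
  have hMln : M ≤ n := by nlinarith
  have hmodeq : (e*k + x) ≡ (e'*k + x') [MOD n] :=
    (ZMod.natCast_eq_natCast_iff _ _ _).mp heq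
  set c := e' - e with hc
  have hsplit : e'*k = e*k + c*k := by rw [← Nat.add_mul]; congr 1; omega
  have h2 : x ≡ c*k + x' [MOD n] := by
    rw [hsplit, Nat.add_assoc] at hmodeq
    exact Nat.ModEq.add_left_cancel' _ hmodeq
  by_cases hc0 : c = 0
  · rw [hc0] at h2
    simp only [Nat.zero_mul, Nat.zero_add] at h2
    have h4 : x % n = x' % n := h2
    rw [Nat.mod_eq_of_lt (show x < n by omega),
      Nat.mod_eq_of_lt (show x' < n by omega)] at h4
    constructor <;> omega
  · exfalso
    have hc1 : 1 ≤ c := by omega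
    have hcd : c < d := by omega
    have hsepc := hsep c hc1 hcd
    have hmod2 : (c*k % n + x') % n = x := by
      have h4 : x % n = (c*k + x') % n := h2
      rw [Nat.mod_eq_of_lt (show x < n by omega)] at h4
      rw [Nat.add_mod] at h4
      rw [Nat.mod_eq_of_lt (show x' < n by omega)] at h4
      exact h4.symm
    have hw : c*k % n < n := Nat.mod_lt _ (by omega)
    have hmin1 : gdist n k c ≤ c*k % n := min_le_left _ _
    have hmin2 : gdist n k c ≤ n - c*k % n := min_le_right _ _
    by_cases hcase : c*k % n + x' < n
    · rw [Nat.mod_eq_of_lt hcase] at hmod2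
      omega
    · have h1 : (c*k % n + x') % n = c*k % n + x' - n := by
        rw [Nat.mod_eq_sub_mod (by omega), Nat.mod_eq_of_lt (by omega)]
      rw [h1] at hmod2
      omega

lemma collision {n k d M : ℕ} [NeZero n] (hM : 1 ≤ M) (hMn : 2*d*M ≤ n)
    (hd : 1 ≤ d)
    (hsep : ∀ c, 1 ≤ c → c < d → M ≤ gdist n k c)
    {e x e' x' : ℕ} (he : e < d) (hx : x < M) (he' : e' < d) (hx' : x' < M)
    (heq : ((e * k + x : ℕ) : ZMod n) = ((e' * k + x' : ℕ) : ZMod n)) :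
    e = e' ∧ x = x' := by
  rcases le_total e e' with hee | hee
  · exact collision_aux hM hMn hd hsep he hx he' hx' hee heq
  · obtain ⟨h1, h2⟩ := collision_aux hM hMn hd hsep he' hx' he hx hee heq.symm
    exact ⟨h1.symm, h2.symm⟩


lemma iset_card {n k d M : ℕ} [NeZero n] (hM : 1 ≤ M) (hMn : 2*d*M ≤ n)
    (hd : 1 ≤ d)
    (hsep : ∀ c, 1 ≤ c → c < d → M ≤ gdist n k c) :
    (iset n k d M).card = d * M := by
  rw [iset, Finset.card_image_of_injOn, Finset.card_product, Finset.card_range,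
    Finset.card_range]
  rintro ⟨e, x⟩ hp ⟨e', x'⟩ hp' heq
  simp only [Finset.mem_coe, Finset.mem_product, Finset.mem_range] at hp hp'
  obtain ⟨h1, h2⟩ := collision hM hMn hd hsep hp.1 hp.2 hp'.1 hp'.2 heq
  simp [h1, h2]


/-- Main theorem. -/
theorem petersen_expanding_constant_lt (n k : ℕ) [NeZero n] (hn : 4 ≤ n)
    (hk1 : 1 ≤ k) (hk2 : 2 * k ≤ n) :
    expandingConstant (petersen n k) <
      Real.sqrt (24 * Real.pi / ((Nat.sqrt n : ℝ) - 1)) := by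
  have hn1 : 1 ≤ n := by omega
  set s := Nat.sqrt n with hsdef
  have hs2 : 2 ≤ s := Nat.le_sqrt.mpr (by omega)
  have hss : s * s ≤ n := Nat.sqrt_le n
  have hπ : (3:ℝ) < Real.pi := Real.pi_gt_three
  have hsR : (2:ℝ) ≤ (s:ℝ) := by exact_mod_cast hs2
  have hden : (0:ℝ) < (s:ℝ) - 1 := by linarith
  have hcard : Fintype.card (ZMod n × Bool) = 2 * n := by
    rw [Fintype.card_prod, ZMod.card, Fintype.card_bool]; ring
  by_cases hbig : 10 ≤ s
  · -- large case
    obtain ⟨m, hm1, hm2, hm3⟩ := exists_small n k hn1 (by omega)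
    have hex : ∃ m, 1 ≤ m ∧ s * gdist n k m < n := ⟨m, hm1, hm3⟩
    obtain ⟨d, ⟨hd1, hdr⟩, hdmin⟩ :
        ∃ d, (1 ≤ d ∧ s * gdist n k d < n) ∧
          ∀ c < d, ¬(1 ≤ c ∧ s * gdist n k c < n) :=
      ⟨Nat.find hex, Nat.find_spec hex, fun c hc => Nat.find_min hex hc⟩
    have hdle : d ≤ s := by
      by_contra hgt
      exact hdmin m (by omega) ⟨hm1, hm3⟩
    set r := gdist n k d with hrdef
    have hdr2 : s * gdist n k d < n := by rw [← hrdef]; exact hdr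
    set M := n / (2*d) with hMdef
    have h2d : 0 < 2*d := by omega
    have hMn : 2*d*M ≤ n := by
      rw [hMdef, Nat.mul_comm]
      exact Nat.div_mul_le_self n (2*d)
    have hM1 : 1 ≤ M := by
      rw [hMdef]
      rw [Nat.one_le_div_iff h2d]
      have h6 : 2*s ≤ s*s := Nat.mul_le_mul_right s hs2
      omega
    have hsep : ∀ c, 1 ≤ c → c < d → M ≤ gdist n k c := by
      intro c hc1 hcd
      have hnc := hdmin c hcd
      push_neg at hnc
      have hge : n ≤ s * gdist n k c := hnc hc1
      have hlt : gdist n k d < gdist n k c := by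
        by_contra hle
        push_neg at hle
        have h5 : s * gdist n k c ≤ s * gdist n k d := Nat.mul_le_mul_left _ hle
        omega
      have hkey := key_sep n k d c hn1 hd1 hc1 hcd hlt
      calc M = n / (2*d) := hMdef
        _ ≤ (2*d*gdist n k c) / (2*d) := Nat.div_le_div_right hkey
        _ = gdist n k c := Nat.mul_div_cancel_left _ h2d
    set F : Finset (ZMod n × Bool) := (iset n k d M) ×ˢ (Finset.univ : Finset Bool) with hF
    have hIcard := iset_card (n:=n) (k:=k) hM1 hMn hd1 hsep
    have hFcard : F.card = d * M * 2 := by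
      rw [hF, Finset.card_product, hIcard, Finset.card_univ, Fintype.card_bool]
    have hFne : F.Nonempty := ⟨(((0*k + 0 : ℕ) : ZMod n), false), by
      rw [hF, Finset.mem_product]
      exact ⟨mem_iset.mpr ⟨0, by omega, 0, by omega, rfl⟩, Finset.mem_univ _⟩⟩
    have hhalf : 2 * F.card ≤ Fintype.card (ZMod n × Bool) := by
      rw [hcard, hFcard]
      have h3 : 2*d*M = 2*(d*M) := by ring
      omega
    have hB : edgeBoundary (petersen n k) F ≤ 2*d + 4*r :=
      boundary_le n k d M r hd1 hM1 hMn hrdef.symm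
    have hle := expandingConstant_le (petersen n k) F hFne hhalf
    have hnum1 : s * (2*d + 4*r) ≤ 6 * n := by
      have ha : s*d ≤ n := le_trans (Nat.mul_le_mul_left s hdle) hss
      have hb : s*r ≤ n := le_of_lt hdr
      calc s*(2*d+4*r) = 2*(s*d) + 4*(s*r) := by ring
        _ ≤ 2*n + 4*n := by omega
        _ = 6*n := by ring
    have hmod := Nat.div_add_mod n (2*d)
    have hmlt : n % (2*d) < 2*d := Nat.mod_lt _ h2d
    have hnum2 : n ≤ 3 * (d * M) := by
      have h1 : 2*d*M = 2*(d*M) := by ring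
      have h2 : 6 * s ≤ n := le_trans (Nat.mul_le_mul_right s (by omega : 6 ≤ s)) hss
      have h4 : 2*d*(n/(2*d)) = 2*d*M := by rw [hMdef]
      omega
    have hs0 : (0:ℝ) < (s:ℝ) := by linarith
    have hdM0 : (0:ℝ) < ((d * M * 2 : ℕ):ℝ) := by
      have h7 : 0 < d * M * 2 := Nat.mul_pos (Nat.mul_pos hd1 hM1) (by norm_num)
      exact_mod_cast h7
    have hratio : (edgeBoundary (petersen n k) F : ℝ) / (F.card : ℝ) ≤ 9 / s := by
      rw [hFcard]
      rw [div_le_div_iff₀ hdM0 hs0]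
      have hBs : (edgeBoundary (petersen n k) F) * s ≤ 9*(d*M*2) := by
        calc edgeBoundary (petersen n k) F * s ≤ (2*d + 4*r) * s :=
              Nat.mul_le_mul_right _ hB
          _ = s * (2*d+4*r) := Nat.mul_comm _ _
          _ ≤ 6*n := hnum1
          _ ≤ 18*(d*M) := by omega
          _ = 9*(d*M*2) := by ring
      exact_mod_cast hBs
    have htarget : (9:ℝ)/s < Real.sqrt (24 * Real.pi / ((s:ℝ) - 1)) := by
      rw [Real.lt_sqrt (by positivity)]
      rw [div_pow, div_lt_div_iff₀ (by positivity) hden]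
      have hs10 : (10:ℝ) ≤ (s:ℝ) := by exact_mod_cast hbig
      nlinarith
    calc expandingConstant (petersen n k) ≤ _ := hle
      _ ≤ 9/(s:ℝ) := hratio
      _ < _ := htarget
  · -- small case: singleton
    push_neg at hbig
    have hs9 : s ≤ 9 := by omega
    have h2n : 2 * ({((0:ZMod n), false)} : Finset (ZMod n × Bool)).card
        ≤ Fintype.card (ZMod n × Bool) := by
      rw [hcard, Finset.card_singleton]
      omega
    have hle := expandingConstant_le (petersen n k) {((0:ZMod n), false)}
      ⟨_, Finset.mem_singleton_self _⟩ h2n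
    have hB := singleton_boundary n k
    have hval : (edgeBoundary (petersen n k) {((0:ZMod n), false)} : ℝ)
        / (({((0:ZMod n), false)} : Finset (ZMod n × Bool)).card : ℝ) ≤ 3 := by
      rw [Finset.card_singleton]
      push_cast
      rw [div_one]
      exact_mod_cast hB
    have htarget : (3:ℝ) < Real.sqrt (24*Real.pi/((s:ℝ)-1)) := by
      rw [Real.lt_sqrt (by norm_num)]
      rw [lt_div_iff₀ hden]
      have hs9R : (s:ℝ) ≤ 9 := by exact_mod_cast hs9
      nlinarith
    calc expandingConstant (petersen n k) ≤ _ := hle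
      _ ≤ 3 := hval
      _ < _ := htarget
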